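/- (Closure of LMB densities under Kullback–Leibler averaging.) For each i in a finite index set I, let π_i be the LMB density with parameter set {(r_i(ℓ), p_i(·, ℓ))}_{ℓ∈𝕃}, where 0 < r_i(ℓ) < 1 and each p_i(·, ℓ) is strictly positive, and let ω_i ≥ 0 with ∑_{i∈I} ω_i = 1. Define η(ℓ) = ∫_X ∏_{i∈I} p_i(x, ℓ)^{ω_i} dμ(x), assumed positive and finite for all ℓ, and set q̃(ℓ) = ∏_{i∈I} (1 − r_i(ℓ))^{ω_i}, r̃(ℓ) = η(ℓ) ∏_{i∈I} r_i(ℓ)^{ω_i}, r̄(ℓ) = r̃(ℓ)/(q̃(ℓ) + r̃(ℓ)), and p̄(x, ℓ) = η(ℓ)^{-1} ∏_{i∈I} p_i(x, ℓ)^{ω_i}. Then the normalized weighted geometric mean of the π_i is exactly the LMB density with parameter set {(r̄(ℓ), p̄(·, ℓ))}_{ℓ∈𝕃}: for every L ⊆ 𝕃 and x ∈ X^L, ∏_{i∈I} π_i(L, x)^{ω_i} / (∑_{J ⊆ 𝕃} ∫_{X^J} ∏_{i∈I} π_i(J, y)^{ω_i} dμ^J(y)) = ∏_{ℓ∈𝕃\L}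 (1 − r̄(ℓ)) ∏_{ℓ∈L} r̄(ℓ) p̄(x_ℓ, ℓ). -/

import Mathlib

open MeasureTheory

private lemma integral_pi_prod' {ι : Type*} [Fintype ι] {X : Type*} [MeasurableSpace X]
    (μ : Measure X) [SigmaFinite μ] (f : ι → X → ℝ) :
    ∫ y : ι → X, ∏ i, f i (y i) ∂(Measure.pi fun _ => μ) = ∏ i, ∫ x, f i x ∂μ := by
  letI : MeasureSpace X := { volume := μ }
  exact MeasureTheory.integral_fintype_prod_eq_prod f

/-- Closure of LMB densities under Kullback–Leibler averaging: the normalized weighted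
geometric mean of LMB densities with parameters `{(r i ℓ, p i · ℓ)}` is the LMB density
with parameters `{(r̄ ℓ, p̄ · ℓ)}`. -/
theorem lmb_closed_under_kla
    {X : Type*} [MeasurableSpace X] (μ : Measure X) [SigmaFinite μ]
    {𝕃 : Type*} [Fintype 𝕃] [DecidableEq 𝕃]
    {I : Type*} [Fintype I]
    (r : I → 𝕃 → ℝ) (p : I → X → 𝕃 → ℝ)
    (hr : ∀ i ℓ, 0 < r i ℓ ∧ r i ℓ < 1)
    (hpmeas : ∀ i ℓ, Measurable (fun x => p i x ℓ))
    (hppos : ∀ i x ℓ, 0 < p i x ℓ)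
    (hpnorm : ∀ i ℓ, ∫ x, p i x ℓ ∂μ = 1)
    (ω : I → ℝ) (hωnn : ∀ i, 0 ≤ ω i) (hωsum : ∑ i, ω i = 1)
    (η : 𝕃 → ℝ)
    (hη : ∀ ℓ, η ℓ = ∫ x, ∏ i, p i x ℓ ^ ω i ∂μ)
    (hηpos : ∀ ℓ, 0 < η ℓ)
    (hηfin : ∀ ℓ, Integrable (fun x => ∏ i, p i x ℓ ^ ω i) μ)
    (qt rt rbar : 𝕃 → ℝ) (pbar : X → 𝕃 → ℝ)
    (hqt : ∀ ℓ, qt ℓ = ∏ i, (1 - r i ℓ) ^ ω i)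
    (hrt : ∀ ℓ, rt ℓ = η ℓ * ∏ i, r i ℓ ^ ω i)
    (hrbar : ∀ ℓ, rbar ℓ = rt ℓ / (qt ℓ + rt ℓ))
    (hpbar : ∀ x ℓ, pbar x ℓ = (η ℓ)⁻¹ * ∏ i, p i x ℓ ^ ω i) :
    ∀ (L : Finset 𝕃) (x : (↥L) → X),
      (∏ i, ((∏ ℓ ∈ Lᶜ, (1 - r i ℓ)) * ∏ ℓ : L, r i ℓ * p i (x ℓ) ℓ) ^ ω i) /
        (∑ J : Finset 𝕃,
          ∫ y, ∏ i, ((∏ ℓ ∈ Jᶜ, (1 - r i ℓ)) * ∏ ℓ : J, r i ℓ * p i (y ℓ) ℓ) ^ ω i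
            ∂(Measure.pi fun _ : J => μ)) =
      (∏ ℓ ∈ Lᶜ, (1 - rbar ℓ)) * ∏ ℓ : L, rbar ℓ * pbar (x ℓ) ℓ := by
  intro L x
  -- key pointwise rewriting
  have key : ∀ (J : Finset 𝕃) (y : (↥J) → X),
      (∏ i, ((∏ ℓ ∈ Jᶜ, (1 - r i ℓ)) * ∏ ℓ : J, r i ℓ * p i (y ℓ) ℓ) ^ ω i)
      = (∏ ℓ ∈ Jᶜ, qt ℓ) *
        ∏ ℓ : J, ((∏ i, r i (ℓ : 𝕃) ^ ω i) * ∏ i, p i (y ℓ) (ℓ : 𝕃) ^ ω i) := by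
    intro J y
    have step : ∀ i : I,
        ((∏ ℓ ∈ Jᶜ, (1 - r i ℓ)) * ∏ ℓ : J, r i ℓ * p i (y ℓ) ℓ) ^ ω i
        = (∏ ℓ ∈ Jᶜ, (1 - r i ℓ) ^ ω i) *
          ∏ ℓ : J, (r i (ℓ : 𝕃) ^ ω i * p i (y ℓ) (ℓ : 𝕃) ^ ω i) := by
      intro i
      rw [Real.mul_rpow (Finset.prod_nonneg fun ℓ _ => by linarith [(hr i ℓ).2])
            (Finset.prod_nonneg fun (ℓ : ↥J) _ =>
              mul_nonneg (hr i (ℓ : 𝕃)).1.le (hppos i (y ℓ) (ℓ : 𝕃)).le)]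
      congr 1
      · exact (Real.finset_prod_rpow _ _ (fun ℓ _ => by linarith [(hr i ℓ).2]) _).symm
      · rw [← Real.finset_prod_rpow _ _ (fun (ℓ : ↥J) _ =>
            mul_nonneg (hr i (ℓ : 𝕃)).1.le (hppos i (y ℓ) (ℓ : 𝕃)).le) _]
        exact Finset.prod_congr rfl fun (ℓ : ↥J) _ =>
          Real.mul_rpow (hr i (ℓ : 𝕃)).1.le (hppos i (y ℓ) (ℓ : 𝕃)).le
    calc (∏ i, ((∏ ℓ ∈ Jᶜ, (1 - r i ℓ)) * ∏ ℓ : J, r i ℓ * p i (y ℓ) ℓ) ^ ω i)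
        = ∏ i, ((∏ ℓ ∈ Jᶜ, (1 - r i ℓ) ^ ω i) *
            ∏ ℓ : J, (r i (ℓ : 𝕃) ^ ω i * p i (y ℓ) (ℓ : 𝕃) ^ ω i)) :=
          Finset.prod_congr rfl fun i _ => step i
      _ = (∏ i, ∏ ℓ ∈ Jᶜ, (1 - r i ℓ) ^ ω i) *
            ∏ i, ∏ ℓ : J, (r i (ℓ : 𝕃) ^ ω i * p i (y ℓ) (ℓ : 𝕃) ^ ω i) :=
          Finset.prod_mul_distrib
      _ = (∏ ℓ ∈ Jᶜ, ∏ i, (1 - r i ℓ) ^ ω i) *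
            ∏ ℓ : J, ∏ i, (r i (ℓ : 𝕃) ^ ω i * p i (y ℓ) (ℓ : 𝕃) ^ ω i) := by
          rw [Finset.prod_comm, Finset.prod_comm (s := Finset.univ (α := I))]
      _ = (∏ ℓ ∈ Jᶜ, qt ℓ) *
            ∏ ℓ : J, ((∏ i, r i (ℓ : 𝕃) ^ ω i) * ∏ i, p i (y ℓ) (ℓ : 𝕃) ^ ω i) := by
          rw [Finset.prod_congr rfl fun ℓ _ => (hqt ℓ).symm]
          congr 1
          exact Finset.prod_congr rfl fun ℓ _ => Finset.prod_mul_distrib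
  -- integral of each term
  have hint : ∀ J : Finset 𝕃,
      (∫ y, ∏ i, ((∏ ℓ ∈ Jᶜ, (1 - r i ℓ)) * ∏ ℓ : J, r i ℓ * p i (y ℓ) ℓ) ^ ω i
        ∂(Measure.pi fun _ : J => μ))
      = (∏ ℓ ∈ Jᶜ, qt ℓ) * ∏ ℓ ∈ J, rt ℓ := by
    intro J
    simp_rw [key J]
    rw [integral_const_mul,
      integral_pi_prod' μ (fun (ℓ : ↥J) (x : X) =>
        (∏ i, r i (ℓ : 𝕃) ^ ω i) * ∏ i, p i x (ℓ : 𝕃) ^ ω i)]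
    congr 1
    calc (∏ ℓ : J, ∫ x, (∏ i, r i (ℓ : 𝕃) ^ ω i) * ∏ i, p i x (ℓ : 𝕃) ^ ω i ∂μ)
        = ∏ ℓ : J, rt (ℓ : 𝕃) := by
          refine Finset.prod_congr rfl fun ℓ _ => ?_
          rw [integral_const_mul, ← hη, hrt, mul_comm]
      _ = ∏ ℓ ∈ J, rt ℓ := Finset.prod_coe_sort J rt
  simp_rw [hint]
  -- denominator
  have hden : (∑ J : Finset 𝕃, (∏ ℓ ∈ Jᶜ, qt ℓ) * ∏ ℓ ∈ J, rt ℓ)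
      = ∏ ℓ, (qt ℓ + rt ℓ) := by
    rw [Finset.prod_add, Finset.powerset_univ]
    refine Fintype.sum_bijective compl (Function.Involutive.bijective compl_compl) _ _
      fun J => ?_
    rw [← Finset.compl_eq_univ_sdiff, compl_compl]
  rw [hden, key L x]
  -- positivity facts
  have hqtpos : ∀ ℓ, 0 < qt ℓ := fun ℓ => by
    rw [hqt]
    exact Finset.prod_pos fun i _ => Real.rpow_pos_of_pos (by linarith [(hr i ℓ).2]) _
  have hrtpos : ∀ ℓ, 0 < rt ℓ := fun ℓ => by
    rw [hrt]
    exact mul_pos (hηpos ℓ) (Finset.prod_pos fun i _ => Real.rpow_pos_of_pos (hr i ℓ).1 _)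
  have hspos : ∀ ℓ, 0 < qt ℓ + rt ℓ := fun ℓ => add_pos (hqtpos ℓ) (hrtpos ℓ)
  -- rewrite RHS
  have h1 : ∀ ℓ, 1 - rbar ℓ = qt ℓ / (qt ℓ + rt ℓ) := fun ℓ => by
    rw [hrbar, eq_div_iff (hspos ℓ).ne', sub_mul, one_mul,
      div_mul_cancel₀ _ (hspos ℓ).ne']
    ring
  have h2 : ∀ (ℓ : 𝕃) (z : X), rbar ℓ * pbar z ℓ
      = ((∏ i, r i ℓ ^ ω i) * ∏ i, p i z ℓ ^ ω i) / (qt ℓ + rt ℓ) := by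
    intro ℓ z
    rw [hrbar, hpbar, div_mul_eq_mul_div]
    congr 1
    rw [hrt]
    field_simp [(hηpos ℓ).ne']
  calc ((∏ ℓ ∈ Lᶜ, qt ℓ) *
          ∏ ℓ : L, ((∏ i, r i (ℓ : 𝕃) ^ ω i) * ∏ i, p i (x ℓ) (ℓ : 𝕃) ^ ω i)) /
        ∏ ℓ, (qt ℓ + rt ℓ)
      = ((∏ ℓ ∈ Lᶜ, qt ℓ) *
          ∏ ℓ : L, ((∏ i, r i (ℓ : 𝕃) ^ ω i) * ∏ i, p i (x ℓ) (ℓ : 𝕃) ^ ω i)) /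
        ((∏ ℓ ∈ Lᶜ, (qt ℓ + rt ℓ)) * ∏ ℓ : L, (qt (ℓ : 𝕃) + rt (ℓ : 𝕃))) := by
        rw [Finset.prod_coe_sort L (fun ℓ => qt ℓ + rt ℓ),
          Finset.prod_compl_mul_prod]
    _ = (∏ ℓ ∈ Lᶜ, qt ℓ / (qt ℓ + rt ℓ)) *
          ∏ ℓ : L, (((∏ i, r i (ℓ : 𝕃) ^ ω i) * ∏ i, p i (x ℓ) (ℓ : 𝕃) ^ ω i) /
            (qt (ℓ : 𝕃) + rt (ℓ : 𝕃))) := by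
        rw [Finset.prod_div_distrib, Finset.prod_div_distrib, div_mul_div_comm]
    _ = (∏ ℓ ∈ Lᶜ, (1 - rbar ℓ)) * ∏ ℓ : L, rbar ℓ * pbar (x ℓ) ℓ := by
        congr 1
        · exact Finset.prod_congr rfl fun ℓ _ => (h1 ℓ).symm
        · exact Finset.prod_congr rfl fun ℓ _ => (h2 (ℓ : 𝕃) (x ℓ)).symm
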